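/- Let A be a ring and M, N complexes of A-modules with M a perfect complex. Then there is an isomorphism D(RHom_A(N, D(A) ⊗^L_A M)) ≅ RHom_A(M, N), natural in M and N, where D = RHom_k(−, k) is k-linear duality. Equivalently (a formulation avoiding derived Hom-duality): for a finite-dimensional algebra A over a field k and finite-dimensional A-modules, there is a natural isomorphism D(Hom_A(N, D(A) ⊗_A M)) ≅ Hom_A(M, N) when M is finitely generated projective. -/

import Mathlib

open MulOpposite

section Nakayama

variable (k A : Type*) [Field k] [Ring A] [Algebra k A]

variable (M : Type*) [AddCommGroup M] [Module A M] [Module k M] [IsScalarTower k A M]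

/-- The Nakayama functor applied to `M`: `ν(M) := D(Hom_A(M, A))`, the `k`-linear dual of
`Hom_A(M, A)`; for `M` finitely generated projective this is `D(A) ⊗_A M`. -/
abbrev Nakayama : Type _ := Module.Dual k (M →ₗ[A] A)

noncomputable instance : SMul A (Nakayama k A M) :=
  ⟨fun a φ => φ.comp (DistribMulAction.toLinearMap k (M →ₗ[A] A) (op a))⟩

lemma nakayama_smul_def (a : A) (φ : Nakayama k A M) (ψ : M →ₗ[A] A) :
    (a • φ) ψ = φ (op a • ψ) := rfl

/-- The left `A`-module structure on `ν(M) = D(Hom_A(M, A))` dual to the right `A`-module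
structure of `Hom_A(M, A)`. -/
noncomputable instance : Module A (Nakayama k A M) where
  one_smul φ := by
    apply LinearMap.ext; intro ψ
    rw [nakayama_smul_def]; rw [op_one, one_smul]
  mul_smul a b φ := by
    apply LinearMap.ext; intro ψ
    rw [nakayama_smul_def, nakayama_smul_def, nakayama_smul_def, op_mul, mul_smul]
  smul_zero a := rfl
  smul_add a φ φ' := rfl
  add_smul a b φ := by
    apply LinearMap.ext; intro ψ
    rw [nakayama_smul_def]
    rw [op_add, add_smul, map_add]
    rfl
  zero_smul φ := by
    apply LinearMap.ext; intro ψ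
    rw [nakayama_smul_def, op_zero, zero_smul, map_zero]
    rfl

instance : SMulCommClass A k (Nakayama k A M) :=
  ⟨fun a c φ => by
    apply LinearMap.ext; intro ψ
    rfl⟩

variable {M} in
/-- Functoriality of the Nakayama functor: a map `h : M' → M` of `A`-modules induces an
`A`-linear map `ν(h) : ν(M') → ν(M)`. -/
noncomputable def nakayamaMap {M' : Type*} [AddCommGroup M'] [Module A M'] [Module k M']
    [IsScalarTower k A M'] (h : M' →ₗ[A] M) :
    Nakayama k A M' →ₗ[A] Nakayama k A M where
  toFun φ :=
    φ.comp
      (show (M →ₗ[A] A) →ₗ[k] (M' →ₗ[A] A) from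
        { toFun := fun ψ : M →ₗ[A] A => ψ.comp h
          map_add' := fun _ _ => LinearMap.add_comp _ _ _
          map_smul' := fun c ψ => LinearMap.ext fun m => rfl })
  map_add' φ φ' := LinearMap.ext fun ψ => rfl
  map_smul' a φ := by
    apply LinearMap.ext; intro ψ
    rfl

end Nakayama

section SerreAux

open Finset

variable {k A : Type*} [Field k] [Ring A] [Algebra k A]

lemma op_smul_hom_apply {M : Type*} [AddCommGroup M] [Module A M]
    (a : A) (ψ : M →ₗ[A] A) (x : M) : (op a • ψ) x = ψ x * a := by
  rw [LinearMap.smul_apply, op_smul_eq_mul]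

noncomputable instance nakayamaTower (M : Type*) [AddCommGroup M] [Module A M] [Module k M]
    [IsScalarTower k A M] : IsScalarTower k A (Nakayama k A M) :=
  ⟨fun c a φ => by
    apply LinearMap.ext; intro ψ
    rw [nakayama_smul_def]
    have h1 : op (c • a) • ψ = c • (op a • ψ) := by
      apply LinearMap.ext; intro x
      rw [op_smul_hom_apply, LinearMap.smul_apply, op_smul_hom_apply, mul_smul_comm]
    rw [h1, map_smul, LinearMap.smul_apply, nakayama_smul_def]⟩

/-- A finite dual basis for an `A`-module. -/
structure SDB (k A M : Type*) [Field k] [Ring A] [Algebra k A]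
    [AddCommGroup M] [Module A M] : Type _ where
  n : ℕ
  m : Fin n → M
  φ : Fin n → (M →ₗ[A] A)
  db : ∀ x : M, ∑ i, φ i x • m i = x

variable {N : Type*} [AddCommGroup N] [Module A N] [Module k N] [IsScalarTower k A N]
  [SMulCommClass A k N]

variable {M : Type*} [AddCommGroup M] [Module A M] [Module k M] [IsScalarTower k A M]

/-- The trace pairing `Hom_A(M,N) → D(Hom_A(N, νM))` determined by a dual basis. -/
noncomputable def E0 (d : SDB k A M) :
    (M →ₗ[A] N) →ₗ[k] Module.Dual k (N →ₗ[A] Nakayama k A M) where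
  toFun f :=
    { toFun := fun ψ => ∑ i, ψ (f (d.m i)) (d.φ i)
      map_add' := fun ψ ψ' => by
        simp only [LinearMap.add_apply]
        rw [← Finset.sum_add_distrib]
      map_smul' := fun c ψ => by
        simp only [LinearMap.smul_apply, RingHom.id_apply, Finset.smul_sum] }
  map_add' f f' := by
    apply LinearMap.ext; intro ψ
    simp only [LinearMap.add_apply, LinearMap.coe_mk, AddHom.coe_mk, map_add]
    rw [← Finset.sum_add_distrib]
  map_smul' c f := by
    apply LinearMap.ext; intro ψ
    simp only [LinearMap.smul_apply, LinearMap.coe_mk, AddHom.coe_mk, RingHom.id_apply,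
      Finset.smul_sum]
    refine Finset.sum_congr rfl fun i _ => ?_
    rw [LinearMap.map_smul_of_tower, LinearMap.smul_apply]

lemma E0_apply (d : SDB k A M) (f : M →ₗ[A] N) (ψ : N →ₗ[A] Nakayama k A M) :
    E0 d f ψ = ∑ i, ψ (f (d.m i)) (d.φ i) := rfl

lemma nakayamaMap_apply {M' : Type*} [AddCommGroup M'] [Module A M'] [Module k M']
    [IsScalarTower k A M'] (h : M' →ₗ[A] M) (φ0 : Nakayama k A M') (ψ : M →ₗ[A] A) :
    nakayamaMap k A h φ0 ψ = φ0 (ψ.comp h) := rfl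

lemma swap_lemma {M' : Type*} [AddCommGroup M'] [Module A M'] [Module k M']
    [IsScalarTower k A M'] (dM : SDB k A M) (dM' : SDB k A M')
    (h : M' →ₗ[A] M) (g : M →ₗ[A] Nakayama k A M') :
    ∑ j, g (h (dM'.m j)) (dM'.φ j) = ∑ i, g (dM.m i) ((dM.φ i).comp h) := by
  calc ∑ j, g (h (dM'.m j)) (dM'.φ j)
      = ∑ j, ∑ i, g (dM.m i) (op (dM.φ i (h (dM'.m j))) • dM'.φ j) := by
        refine Finset.sum_congr rfl fun j _ => ?_
        conv_lhs => rw [← dM.db (h (dM'.m j))]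
        rw [map_sum, LinearMap.sum_apply]
        refine Finset.sum_congr rfl fun i _ => ?_
        rw [map_smul]
        exact nakayama_smul_def k A M' _ _ _
    _ = ∑ i, ∑ j, g (dM.m i) (op (dM.φ i (h (dM'.m j))) • dM'.φ j) := Finset.sum_comm
    _ = ∑ i, g (dM.m i) ((dM.φ i).comp h) := by
        refine Finset.sum_congr rfl fun i _ => ?_
        rw [← map_sum]
        congr 1
        apply LinearMap.ext; intro x
        rw [LinearMap.sum_apply]
        have hx : (dM.φ i) (h x) = ∑ j, (dM'.φ j) x * (dM.φ i) (h (dM'.m j)) := by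
          conv_lhs => rw [← dM'.db x, map_sum, map_sum]
          refine Finset.sum_congr rfl fun j _ => ?_
          rw [map_smul, map_smul, smul_eq_mul]
        simp only [op_smul_hom_apply, LinearMap.coe_comp, Function.comp_apply]
        rw [hx]

lemma E0_nat_N {N' : Type*} [AddCommGroup N'] [Module A N'] [Module k N']
    [IsScalarTower k A N'] [SMulCommClass A k N'] (d : SDB k A M)
    (g : N →ₗ[A] N') (f : M →ₗ[A] N) (ψ : N' →ₗ[A] Nakayama k A M) :
    E0 d (g.comp f) ψ = E0 d f (ψ.comp g) := rfl

lemma E0_nat_M {M' : Type*} [AddCommGroup M'] [Module A M'] [Module k M']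
    [IsScalarTower k A M'] (dM : SDB k A M) (dM' : SDB k A M')
    (h : M' →ₗ[A] M) (f : M →ₗ[A] N) (ψ : N →ₗ[A] Nakayama k A M') :
    E0 dM' (f.comp h) ψ = E0 dM f ((nakayamaMap k A h).comp ψ) :=
  swap_lemma dM dM' h (ψ.comp f)

lemma nakayamaMap_comp_nakayamaMap {M' : Type*} [AddCommGroup M'] [Module A M'] [Module k M']
    [IsScalarTower k A M'] (p : M' →ₗ[A] M) (s : M →ₗ[A] M') (hps : p.comp s = LinearMap.id) :
    ∀ φ0 : Nakayama k A M, nakayamaMap k A p (nakayamaMap k A s φ0) = φ0 := by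
  intro φ0
  apply LinearMap.ext; intro ψ
  rw [nakayamaMap_apply, nakayamaMap_apply, LinearMap.comp_assoc, hps, LinearMap.comp_id]

lemma single_eq_smul (n : ℕ) (i : Fin n) (a : A) :
    (Pi.single i a : Fin n → A) = a • (Pi.single i 1 : Fin n → A) := by
  funext j
  rcases eq_or_ne j i with rfl | hj
  · simp
  · simp [Pi.single_eq_of_ne hj]

/-- The standard dual basis of `Fin n → A`. -/
def stdSDB (n : ℕ) : SDB k A (Fin n → A) where
  n := n
  m i := Pi.single i 1
  φ i := LinearMap.proj i
  db x := by
    simp only [LinearMap.proj_apply, ← single_eq_smul]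
    exact Finset.univ_sum_single x

lemma proj_span (n : ℕ) (h : (Fin n → A) →ₗ[A] A) :
    h = ∑ i, op (h (Pi.single i 1)) • (LinearMap.proj i : (Fin n → A) →ₗ[A] A) := by
  apply LinearMap.ext; intro x
  rw [LinearMap.sum_apply]
  simp only [op_smul_hom_apply, LinearMap.proj_apply]
  conv_lhs => rw [← Finset.univ_sum_single x]
  rw [map_sum]
  refine Finset.sum_congr rfl fun i _ => ?_
  rw [single_eq_smul, map_smul, smul_eq_mul]

/-- Coevaluation: a dual vector `lam` on `N` and an index `i` give an `A`-linear map
`N → ν(A^n)`. -/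
noncomputable def coeval (n : ℕ) (i : Fin n) (lam : Module.Dual k N) :
    N →ₗ[A] Nakayama k A (Fin n → A) where
  toFun x :=
    { toFun := fun h => lam (h (Pi.single i 1) • x)
      map_add' := fun h h' => by
        simp only [LinearMap.add_apply, add_smul, map_add]
      map_smul' := fun c h => by
        simp only [LinearMap.smul_apply, smul_assoc, map_smul, RingHom.id_apply] }
  map_add' x y := by
    apply LinearMap.ext; intro h
    simp only [LinearMap.coe_mk, AddHom.coe_mk, LinearMap.add_apply, smul_add, map_add]
  map_smul' a x := by
    apply LinearMap.ext; intro h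
    simp only [LinearMap.coe_mk, AddHom.coe_mk, RingHom.id_apply]
    rw [nakayama_smul_def]
    simp only [LinearMap.coe_mk, AddHom.coe_mk, op_smul_hom_apply]
    rw [← mul_smul]

/-- Extraction of the `i`-th dual component of an `A`-linear map `N → ν(A^n)`. -/
noncomputable def lamOf (n : ℕ) (ψ : N →ₗ[A] Nakayama k A (Fin n → A)) (i : Fin n) :
    Module.Dual k N where
  toFun x := ψ x ((LinearMap.proj i : (Fin n → A) →ₗ[A] A))
  map_add' x y := by
    show ψ (x + y) (LinearMap.proj i) = _
    rw [map_add, LinearMap.add_apply]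
  map_smul' c x := by
    show ψ (c • x) (LinearMap.proj i) = c • ψ x (LinearMap.proj i)
    rw [LinearMap.map_smul_of_tower, LinearMap.smul_apply]

lemma psi_decomp (n : ℕ) (ψ : N →ₗ[A] Nakayama k A (Fin n → A)) :
    ψ = ∑ i, coeval n i (lamOf n ψ i) := by
  apply LinearMap.ext; intro x
  apply LinearMap.ext; intro h
  rw [LinearMap.sum_apply, LinearMap.sum_apply]
  conv_lhs => rw [proj_span n h, map_sum]
  refine Finset.sum_congr rfl fun i _ => ?_
  have h1 : ψ x (op (h (Pi.single i 1)) • LinearMap.proj i)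
      = (h (Pi.single i 1) • ψ x) (LinearMap.proj i) := by
    rw [nakayama_smul_def]
  rw [h1, ← map_smul]
  rfl

lemma EF_bijective (n : ℕ) [FiniteDimensional k N] :
    Function.Bijective (E0 (N := N) (stdSDB (k := k) (A := A) n)) := by
  constructor
  · rw [injective_iff_map_eq_zero]
    intro f hf
    have hfi : ∀ i : Fin n, f (Pi.single i 1) = 0 := by
      intro i
      rw [← Module.forall_dual_apply_eq_zero_iff k]
      intro lam
      have h2 := congrArg (fun Ξ => Ξ (coeval n i lam)) hf
      simp only [LinearMap.zero_apply] at h2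
      have h2' : ∑ j : Fin n,
          lam ((Pi.single i (1:A) : Fin n → A) j • f (Pi.single j 1)) = 0 := h2
      rw [Finset.sum_eq_single i] at h2'
      · rwa [Pi.single_eq_same, one_smul] at h2'
      · intro j _ hj
        rw [Pi.single_eq_of_ne hj, zero_smul, map_zero]
      · intro hi; exact absurd (Finset.mem_univ i) hi
    apply LinearMap.pi_ext'
    intro i
    apply LinearMap.ext; intro a
    have h4 : (f.comp (LinearMap.single A (fun _ => A) i)) a = f (Pi.single i a) := rfl
    rw [h4, single_eq_smul, map_smul, hfi i, smul_zero]
    rfl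
  · intro ξ
    have hx : ∀ i : Fin n, ∃ x : N, ∀ lam : Module.Dual k N, lam x = ξ (coeval n i lam) := by
      intro i
      let lin : Module.Dual k (Module.Dual k N) :=
        { toFun := fun lam => ξ (coeval n i lam)
          map_add' := fun lam lam' => by
            show ξ (coeval n i (lam + lam')) = ξ (coeval n i lam) + ξ (coeval n i lam')
            have h5 : coeval (N := N) (k := k) (A := A) n i (lam + lam')
                = coeval n i lam + coeval n i lam' := by
              apply LinearMap.ext; intro x; apply LinearMap.ext; intro h
              simp only [coeval, LinearMap.coe_mk, AddHom.coe_mk, LinearMap.add_apply]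
            rw [h5, map_add]
          map_smul' := fun c lam => by
            show ξ (coeval n i (c • lam)) = c • ξ (coeval n i lam)
            have h5 : coeval (N := N) (k := k) (A := A) n i (c • lam)
                = c • coeval n i lam := by
              apply LinearMap.ext; intro x; apply LinearMap.ext; intro h
              simp only [coeval, LinearMap.coe_mk, AddHom.coe_mk, LinearMap.smul_apply]
            rw [h5, map_smul] }
      obtain ⟨x, hx⟩ := (Module.evalEquiv k N).surjective lin
      refine ⟨x, fun lam => ?_⟩
      have h6 := congrArg (fun Λ : Module.Dual k (Module.Dual k N) => Λ lam) hx
      simp only [Module.evalEquiv_apply, Module.Dual.eval_apply] at h6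
      exact h6
    choose x hx using hx
    refine ⟨∑ i, (LinearMap.toSpanSingleton A N (x i)).comp (LinearMap.proj i), ?_⟩
    apply LinearMap.ext; intro ψ
    have hfe : ∀ j : Fin n,
        (∑ i, (LinearMap.toSpanSingleton A N (x i)).comp (LinearMap.proj i))
          (Pi.single j (1:A) : Fin n → A) = x j := by
      intro j
      rw [LinearMap.sum_apply]
      have h5 : ∀ i : Fin n,
          ((LinearMap.toSpanSingleton A N (x i)).comp (LinearMap.proj i))
            (Pi.single j (1:A) : Fin n → A)
          = (Pi.single j (1:A) : Fin n → A) i • x i := fun _ => rfl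
      rw [Finset.sum_congr rfl fun i _ => h5 i, Finset.sum_eq_single j]
      · rw [Pi.single_eq_same, one_smul]
      · intro i _ hi
        rw [Pi.single_eq_of_ne hi, zero_smul]
      · intro hj; exact absurd (Finset.mem_univ j) hj
    show ∑ j : Fin n,
        ψ ((∑ i, (LinearMap.toSpanSingleton A N (x i)).comp (LinearMap.proj i))
          (Pi.single j (1:A) : Fin n → A)) (LinearMap.proj j) = ξ ψ
    have hterm : ∀ j : Fin n,
        ψ ((∑ i, (LinearMap.toSpanSingleton A N (x i)).comp (LinearMap.proj i))
          (Pi.single j (1:A) : Fin n → A)) (LinearMap.proj j)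
        = ψ (x j) (LinearMap.proj j) := fun j => by rw [hfe j]
    rw [Finset.sum_congr rfl fun j _ => hterm j]
    conv_rhs => rw [psi_decomp n ψ, map_sum]
    refine Finset.sum_congr rfl fun i _ => ?_
    rw [← hx i (lamOf n ψ i)]
    rfl

lemma E0_bijective [FiniteDimensional k N] [Module.Finite A M] [Module.Projective A M]
    (d : SDB k A M) : Function.Bijective (E0 (N := N) d) := by
  obtain ⟨n, p, hp⟩ := Module.Finite.exists_fin' A M
  obtain ⟨s, hs⟩ := Module.projective_lifting_property p LinearMap.id hp
  constructor
  · rw [injective_iff_map_eq_zero]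
    intro f hf
    have h1 : E0 (stdSDB (k := k) (A := A) n) (f.comp p) = 0 := by
      apply LinearMap.ext; intro ψ'
      rw [E0_nat_M d (stdSDB n) p f ψ']
      rw [hf]
      rfl
    have h2 := (EF_bijective (k := k) (A := A) (N := N) n).injective
    rw [injective_iff_map_eq_zero] at h2
    have h3 := h2 _ h1
    have : f = (f.comp p).comp s := by
      rw [LinearMap.comp_assoc, hs, LinearMap.comp_id]
    rw [this, h3, LinearMap.zero_comp]
  · intro ξ
    set ξ' : Module.Dual k (N →ₗ[A] Nakayama k A (Fin n → A)) :=
      { toFun := fun ψ' => ξ ((nakayamaMap k A p).comp ψ')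
        map_add' := fun ψ' ψ'' => by
          show ξ ((nakayamaMap k A p).comp (ψ' + ψ'')) = _
          rw [LinearMap.comp_add, map_add]
        map_smul' := fun c ψ' => by
          show ξ ((nakayamaMap k A p).comp (c • ψ')) = c • ξ ((nakayamaMap k A p).comp ψ')
          have : (nakayamaMap k A p).comp (c • ψ') = c • (nakayamaMap k A p).comp ψ' := by
            apply LinearMap.ext; intro x
            simp only [LinearMap.comp_apply, LinearMap.smul_apply]
            exact LinearMap.map_smul_of_tower _ c _
          rw [this, map_smul] } with hξ'
    obtain ⟨f', hf'⟩ := (EF_bijective (k := k) (A := A) (N := N) n).surjective ξ'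
    refine ⟨f'.comp s, ?_⟩
    apply LinearMap.ext; intro ψ
    rw [E0_nat_M (stdSDB n) d s f' ψ]
    have h6 := congrArg (fun Ξ => Ξ ((nakayamaMap k A s).comp ψ)) hf'
    rw [h6, hξ']
    simp only [LinearMap.coe_mk, AddHom.coe_mk]
    congr 1
    apply LinearMap.ext; intro x
    simp only [LinearMap.comp_apply]
    exact nakayamaMap_comp_nakayamaMap p s hs (ψ x)

/-- A choice of dual basis for each finitely generated projective module. -/
noncomputable def chosenSDB (M : Type*) [AddCommGroup M] [Module A M]
    [Module.Finite A M] [Module.Projective A M] : SDB k A M := by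
  have h1 := Module.Finite.exists_fin' A M
  let n := h1.choose
  have h2 := h1.choose_spec
  let p := h2.choose
  have hp := h2.choose_spec
  have h3 := Module.projective_lifting_property p LinearMap.id hp
  let s := h3.choose
  have hs := h3.choose_spec
  exact
    { n := n
      m := fun i => p (Pi.single i 1)
      φ := fun i => (LinearMap.proj i).comp s
      db := fun x => by
        have h4 : ∀ i : Fin n, ((LinearMap.proj i).comp s) x • p (Pi.single i 1)
            = p (Pi.single i (s x i)) := by
          intro i
          conv_rhs => rw [single_eq_smul, map_smul]
          rfl
        rw [Finset.sum_congr rfl fun i _ => h4 i, ← map_sum, Finset.univ_sum_single (s x)]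
        have h6 := congrArg (fun q => q x) hs
        simpa using h6 }

end SerreAux

/-- Serre duality at the module level (Auslander–Reiten duality for projectives): over a
finite-dimensional `k`-algebra `A` there is, for every finitely generated projective
finite-dimensional `M` and every finite-dimensional `N`, a `k`-linear isomorphism
`Hom_A(M, N) ≅ D(Hom_A(N, ν M))`, where `ν M = D(Hom_A(M, A))` (which is `D(A) ⊗_A M` for such
`M`), and this family of isomorphisms is natural in `N` and in `M`. -/
theorem serre_duality_for_modules
    (k A : Type*) [Field k] [Ring A] [Algebra k A] [FiniteDimensional k A] :
    ∃ E : ∀ (M : Type) (_ : AddCommGroup M) (_ : Module A M) (_ : Module k M)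
        (_ : IsScalarTower k A M) (_ : SMulCommClass A k M)
        (_ : Module.Finite A M) (_ : Module.Projective A M) (_ : FiniteDimensional k M)
        (N : Type) (_ : AddCommGroup N) (_ : Module A N) (_ : Module k N)
        (_ : IsScalarTower k A N) (_ : SMulCommClass A k N) (_ : FiniteDimensional k N),
        (M →ₗ[A] N) ≃ₗ[k] Module.Dual k (N →ₗ[A] Nakayama k A M),
      -- naturality in N
      (∀ (M : Type) (iM1 : AddCommGroup M) (iM2 : Module A M) (iM3 : Module k M)
          (iM4 : IsScalarTower k A M) (iM5 : SMulCommClass A k M)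
          (iM6 : Module.Finite A M) (iM7 : Module.Projective A M) (iM8 : FiniteDimensional k M)
          (N : Type) (iN1 : AddCommGroup N) (iN2 : Module A N) (iN3 : Module k N)
          (iN4 : IsScalarTower k A N) (iN5 : SMulCommClass A k N) (iN6 : FiniteDimensional k N)
          (N' : Type) (iN'1 : AddCommGroup N') (iN'2 : Module A N') (iN'3 : Module k N')
          (iN'4 : IsScalarTower k A N') (iN'5 : SMulCommClass A k N')
          (iN'6 : FiniteDimensional k N')
          (g : N →ₗ[A] N') (f : M →ₗ[A] N) (ψ : N' →ₗ[A] Nakayama k A M),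
          E M iM1 iM2 iM3 iM4 iM5 iM6 iM7 iM8 N' iN'1 iN'2 iN'3 iN'4 iN'5 iN'6 (g.comp f) ψ
            = E M iM1 iM2 iM3 iM4 iM5 iM6 iM7 iM8 N iN1 iN2 iN3 iN4 iN5 iN6 f (ψ.comp g)) ∧
      -- naturality in M
      (∀ (M : Type) (iM1 : AddCommGroup M) (iM2 : Module A M) (iM3 : Module k M)
          (iM4 : IsScalarTower k A M) (iM5 : SMulCommClass A k M)
          (iM6 : Module.Finite A M) (iM7 : Module.Projective A M) (iM8 : FiniteDimensional k M)
          (M' : Type) (iM'1 : AddCommGroup M') (iM'2 : Module A M') (iM'3 : Module k M')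
          (iM'4 : IsScalarTower k A M') (iM'5 : SMulCommClass A k M')
          (iM'6 : Module.Finite A M') (iM'7 : Module.Projective A M')
          (iM'8 : FiniteDimensional k M')
          (N : Type) (iN1 : AddCommGroup N) (iN2 : Module A N) (iN3 : Module k N)
          (iN4 : IsScalarTower k A N) (iN5 : SMulCommClass A k N) (iN6 : FiniteDimensional k N)
          (h : M' →ₗ[A] M) (f : M →ₗ[A] N) (ψ : N →ₗ[A] Nakayama k A M'),
          E M' iM'1 iM'2 iM'3 iM'4 iM'5 iM'6 iM'7 iM'8 N iN1 iN2 iN3 iN4 iN5 iN6 (f.comp h) ψ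
            = E M iM1 iM2 iM3 iM4 iM5 iM6 iM7 iM8 N iN1 iN2 iN3 iN4 iN5 iN6 f
                ((nakayamaMap k A h).comp ψ)) := by
  classical
  refine ⟨fun M iM1 iM2 iM3 iM4 iM5 iM6 iM7 iM8 N jN1 jN2 jN3 jN4 jN5 jN6 =>
    LinearEquiv.ofBijective (E0 (chosenSDB (k := k) (A := A) M)) (E0_bijective _), ?_, ?_⟩
  · intro M iM1 iM2 iM3 iM4 iM5 iM6 iM7 iM8 N iN1 iN2 iN3 iN4 iN5 iN6
      N' iN'1 iN'2 iN'3 iN'4 iN'5 iN'6 g f ψ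
    exact E0_nat_N (chosenSDB M) g f ψ
  · intro M iM1 iM2 iM3 iM4 iM5 iM6 iM7 iM8 M' iM'1 iM'2 iM'3 iM'4 iM'5 iM'6 iM'7 iM'8
      N iN1 iN2 iN3 iN4 iN5 iN6 h f ψ
    exact E0_nat_M (chosenSDB M) (chosenSDB M') h f ψ
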